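/- arXiv:2501.15861 — 3 statements merged into one kernel-verified Lean document; each statement's English description precedes it below -/
import Mathlib

section
/- Let G be a finite simple graph with n' vertices, e' edges, and average degree d' = 2e'/n' > 100. Then G contains at least (e')³/(10·(n')²) paths with 3 edges (i.e., sequences of 4 distinct vertices w,x,y,z with wx, xy, yz ∈ E(G)). -/
open Finset
set_option linter.unusedSectionVars false
set_option linter.unusedVariables false
set_option maxHeartbeats 1000000

section Aux
variable {V : Type*} [Fintype V] [DecidableEq V] (G : SimpleGraph V) [DecidableRel G.Adj]

def Dd (G : SimpleGraph V) [DecidableRel G.Adj] (A : Finset V) : ℕ :=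
  ((A ×ˢ A).filter fun p => G.Adj p.1 p.2).card

lemma Dd_eq_sum (A : Finset V) : Dd G A = ∑ v ∈ A, (A.filter (G.Adj v)).card := by
  unfold Dd
  rw [Finset.card_filter, Finset.sum_product]
  exact Finset.sum_congr rfl fun v _ => (Finset.card_filter _ _).symm

lemma Dd_univ : Dd G Finset.univ = 2 * G.edgeFinset.card := by
  rw [Dd_eq_sum, ← SimpleGraph.sum_degrees_eq_twice_card_edges]
  refine Finset.sum_congr rfl fun v _ => ?_
  rw [← SimpleGraph.neighborFinset_eq_filter, SimpleGraph.degree]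

lemma Dd_erase (A : Finset V) (v : V) :
    Dd G A ≤ Dd G (A.erase v) + 2 * (A.filter (G.Adj v)).card := by
  classical
  set N := A.filter (G.Adj v) with hN
  have hsub : ((A ×ˢ A).filter fun p => G.Adj p.1 p.2) ⊆
      (((A.erase v ×ˢ A.erase v).filter fun p => G.Adj p.1 p.2)
        ∪ N.image (fun u => (v, u))) ∪ N.image (fun u => (u, v)) := by
    intro p hp
    simp only [Finset.mem_filter, Finset.mem_product] at hp
    obtain ⟨⟨h1, h2⟩, hadj⟩ := hp
    by_cases hv1 : p.1 = v
    · apply Finset.mem_union_left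
      apply Finset.mem_union_right
      refine Finset.mem_image.mpr ⟨p.2, ?_, ?_⟩
      · rw [hN, Finset.mem_filter]; exact ⟨h2, hv1 ▸ hadj⟩
      · rw [← hv1]
    · by_cases hv2 : p.2 = v
      · apply Finset.mem_union_right
        refine Finset.mem_image.mpr ⟨p.1, ?_, ?_⟩
        · rw [hN, Finset.mem_filter]; exact ⟨h1, (hv2 ▸ hadj).symm⟩
        · rw [← hv2]
      · apply Finset.mem_union_left
        apply Finset.mem_union_left
        simp only [Finset.mem_filter, Finset.mem_product, Finset.mem_erase]
        exact ⟨⟨⟨hv1, h1⟩, ⟨hv2, h2⟩⟩, hadj⟩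
  have := Finset.card_le_card hsub
  have h1 := Finset.card_union_le (((A.erase v ×ˢ A.erase v).filter fun p => G.Adj p.1 p.2)
        ∪ N.image (fun u => (v, u))) (N.image (fun u => (u, v)))
  have h2 := Finset.card_union_le ((A.erase v ×ˢ A.erase v).filter fun p => G.Adj p.1 p.2)
        (N.image (fun u => (v, u)))
  have h3 := Finset.card_image_le (s := N) (f := fun u => (v, u))
  have h4 := Finset.card_image_le (s := N) (f := fun u => (u, v))
  unfold Dd
  omega

lemma exists_minDeg (c : ℝ) (hc : 0 ≤ c) (A : Finset V) :
    ∃ B ⊆ A, (∀ v ∈ B, c < ((B.filter (G.Adj v)).card : ℝ)) ∧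
      (Dd G A : ℝ) - 2*c*((A.card : ℝ) - B.card) ≤ (Dd G B : ℝ) := by
  induction A using Finset.strongInduction with
  | _ A ih =>
    by_cases h : ∀ v ∈ A, c < ((A.filter (G.Adj v)).card : ℝ)
    · exact ⟨A, Finset.Subset.refl A, h, by simp⟩
    · push_neg at h
      obtain ⟨v, hv, hdeg⟩ := h
      obtain ⟨B, hBsub, hBdeg, hBD⟩ := ih (A.erase v) (Finset.erase_ssubset hv)
      refine ⟨B, hBsub.trans (Finset.erase_subset v A), hBdeg, ?_⟩
      have h1 : (Dd G A : ℝ) ≤ Dd G (A.erase v) + 2 * ((A.filter (G.Adj v)).card : ℝ) := by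
        exact_mod_cast Dd_erase G A v
      have hA1 : 1 ≤ A.card := Finset.card_pos.mpr ⟨v, hv⟩
      have h2 : ((A.erase v).card : ℝ) = (A.card : ℝ) - 1 := by
        rw [Finset.card_erase_of_mem hv]
        push_cast [Nat.cast_sub hA1]
        ring
      rw [h2] at hBD
      nlinarith [hBD, h1, hdeg]

lemma count_paths (B : Finset V) (c : ℝ) (hc : 2 < c)
    (hdeg : ∀ v ∈ B, c < ((B.filter (G.Adj v)).card : ℝ)) :
    (Dd G B : ℝ) * ((c-1)*(c-2)) ≤
      ((((B ×ˢ B) ×ˢ (B ×ˢ B)).filter fun q =>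
        G.Adj q.1.1 q.1.2 ∧ G.Adj q.1.1 q.2.1 ∧ q.2.1 ≠ q.1.2 ∧
        G.Adj q.1.2 q.2.2 ∧ q.2.2 ≠ q.1.1 ∧ q.2.2 ≠ q.2.1).card : ℝ) := by
  classical
  set S := (((B ×ˢ B) ×ˢ (B ×ˢ B)).filter fun q =>
        G.Adj q.1.1 q.1.2 ∧ G.Adj q.1.1 q.2.1 ∧ q.2.1 ≠ q.1.2 ∧
        G.Adj q.1.2 q.2.2 ∧ q.2.2 ≠ q.1.1 ∧ q.2.2 ≠ q.2.1) with hS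
  set T := (B ×ˢ B).filter (fun p => G.Adj p.1 p.2) with hT
  have hmap : ∀ q ∈ S, q.1 ∈ T := by
    intro q hq
    simp only [hS, Finset.mem_filter, Finset.mem_product] at hq
    simp only [hT, Finset.mem_filter, Finset.mem_product]
    exact ⟨hq.1.1, hq.2.1⟩
  have hcard := Finset.card_eq_sum_card_fiberwise hmap
  have hfiber : ∀ p ∈ T, (c-1)*(c-2) ≤ ((S.filter fun q => q.1 = p).card : ℝ) := by
    intro p hp
    simp only [hT, Finset.mem_filter, Finset.mem_product] at hp
    obtain ⟨⟨hx, hy⟩, hadj⟩ := hp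
    set Wx := (B.filter (G.Adj p.1)).erase p.2 with hWx
    set Zy := (B.filter (G.Adj p.2)).erase p.1 with hZy
    set WZ := (Wx ×ˢ Zy).filter (fun r => r.2 ≠ r.1) with hWZ
    -- WZ injects into the fiber
    have hinj : WZ.card ≤ (S.filter fun q => q.1 = p).card := by
      apply Finset.card_le_card_of_injOn (fun r => (p, r))
      · intro r hr
        simp only [hWZ, hWx, hZy, Finset.mem_coe, Finset.mem_filter, Finset.mem_product,
          Finset.mem_erase] at hr
        simp only [hS, Finset.mem_coe, Finset.mem_filter, Finset.mem_product]
        refine ⟨⟨⟨⟨hx, hy⟩, ?_, ?_⟩, hadj, ?_, ?_, ?_, ?_, ?_⟩, trivial⟩ <;> tauto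
      · intro a _ b _ hab
        exact (Prod.ext_iff.mp hab).2
    -- diag bound
    have hsplit : WZ.card + ((Wx ×ˢ Zy).filter (fun r => ¬ r.2 ≠ r.1)).card
        = Wx.card * Zy.card := by
      rw [hWZ, Finset.card_filter_add_card_filter_not, Finset.card_product]
    have hdiag : ((Wx ×ˢ Zy).filter (fun r => ¬ r.2 ≠ r.1)).card ≤ Zy.card := by
      apply Finset.card_le_card_of_injOn (fun r => r.2)
      · intro r hr
        simp only [Finset.mem_coe, Finset.mem_filter, Finset.mem_product] at hr
        exact hr.1.2
      · intro a ha b hb hab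
        simp only [Finset.mem_coe, Finset.mem_filter, not_ne_iff] at ha hb
        exact Prod.ext (by rw [← ha.2, ← hb.2]; exact hab) hab
    -- degree bounds
    have hWcard : (c : ℝ) - 1 < (Wx.card : ℝ) := by
      have h1 : c < ((B.filter (G.Adj p.1)).card : ℝ) := hdeg p.1 hx
      have h2 : (B.filter (G.Adj p.1)).card - 1 ≤ Wx.card := Finset.pred_card_le_card_erase
      have h3 : 1 ≤ (B.filter (G.Adj p.1)).card := by
        by_contra h
        push_neg at h
        interval_cases h' : (B.filter (G.Adj p.1)).card
        · simp [h'] at h1; linarith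
      have := Nat.cast_le (α := ℝ) |>.mpr h2
      rw [Nat.cast_sub h3] at this
      push_cast at this ⊢
      linarith
    have hZcard : (c : ℝ) - 1 < (Zy.card : ℝ) := by
      have h1 : c < ((B.filter (G.Adj p.2)).card : ℝ) := hdeg p.2 hy
      have h2 : (B.filter (G.Adj p.2)).card - 1 ≤ Zy.card := Finset.pred_card_le_card_erase
      have h3 : 1 ≤ (B.filter (G.Adj p.2)).card := by
        by_contra h
        push_neg at h
        interval_cases h' : (B.filter (G.Adj p.2)).card
        · simp [h'] at h1; linarith
      have := Nat.cast_le (α := ℝ) |>.mpr h2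
      rw [Nat.cast_sub h3] at this
      push_cast at this ⊢
      linarith
    have hWZcard : (Wx.card : ℝ) * Zy.card - Zy.card ≤ (WZ.card : ℝ) := by
      have := Nat.cast_le (α := ℝ) |>.mpr hdiag
      have h2 : (WZ.card : ℝ) + ((Wx ×ˢ Zy).filter (fun r => ¬ r.2 ≠ r.1)).card
          = Wx.card * Zy.card := by exact_mod_cast hsplit
      linarith
    have : (c-1)*(c-2) ≤ (WZ.card : ℝ) := by nlinarith
    calc (c-1)*(c-2) ≤ (WZ.card : ℝ) := this
      _ ≤ _ := by exact_mod_cast hinj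
  -- sum up
  have hTcard : T.card = Dd G B := rfl
  have hsum : (T.card : ℝ) * ((c-1)*(c-2)) ≤ ∑ p ∈ T, ((S.filter fun q => q.1 = p).card : ℝ) := by
    calc (T.card : ℝ) * ((c-1)*(c-2)) = ∑ _p ∈ T, (c-1)*(c-2) := by
          rw [Finset.sum_const, nsmul_eq_mul]
      _ ≤ _ := Finset.sum_le_sum hfiber
  rw [← hTcard]
  calc (T.card : ℝ) * ((c-1)*(c-2)) ≤ _ := hsum
    _ = (S.card : ℝ) := by rw [hcard]; push_cast; ring

lemma inj4 {w x y z : V} (h1 : w ≠ x) (h2 : w ≠ y) (h3 : w ≠ z) (h4 : x ≠ y)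
    (h5 : x ≠ z) (h6 : y ≠ z) : Function.Injective ![w, x, y, z] := by
  intro a b hab
  fin_cases a <;> fin_cases b <;> simp_all

end Aux

theorem stmt_11 {V : Type*} [Fintype V] [DecidableEq V]
    (G : SimpleGraph V) [DecidableRel G.Adj] (n' e' : ℕ)
    (hn : Fintype.card V = n') (he : G.edgeFinset.card = e')
    (hd : (2 * e' : ℝ) / (n' : ℝ) > 100) :
    ((Set.ncard {p : Fin 4 → V | Function.Injective p ∧
        G.Adj (p 0) (p 1) ∧ G.Adj (p 1) (p 2) ∧ G.Adj (p 2) (p 3)}) : ℝ)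
      ≥ (e' : ℝ) ^ 3 / (10 * (n' : ℝ) ^ 2) := by
  classical
  have hn0 : 0 < (n' : ℝ) := by
    by_contra h
    push_neg at h
    have h0 : (n' : ℝ) = 0 := le_antisymm h (Nat.cast_nonneg n')
    rw [h0, div_zero] at hd
    linarith
  set c : ℝ := (e' : ℝ) / (2 * n') with hc
  have hceq : c = ((2 * e' : ℝ) / (n' : ℝ)) / 4 := by
    rw [hc]; field_simp; ring
  have hc25 : 25 < c := by rw [hceq]; linarith
  have hc0 : (0 : ℝ) ≤ c := by linarith
  obtain ⟨B, hBsub, hBdeg, hBD⟩ := exists_minDeg G c hc0 Finset.univ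
  have hDuniv : (Dd G Finset.univ : ℝ) = 2 * e' := by
    rw [Dd_univ, he]; push_cast; ring
  have hcard_univ : (((Finset.univ : Finset V)).card : ℝ) = n' := by
    rw [Finset.card_univ, hn]
  have hB0 : (0 : ℝ) ≤ (B.card : ℝ) := Nat.cast_nonneg _
  have h2cn : 2 * c * (n' : ℝ) = e' := by
    rw [hc]; field_simp
  have hDB : (e' : ℝ) ≤ (Dd G B : ℝ) := by
    have h1 : 2 * c * ((Finset.univ : Finset V).card - (B.card : ℝ)) ≤ 2 * c * n' := by
      apply mul_le_mul_of_nonneg_left _ (by linarith)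
      rw [hcard_univ]; linarith
    rw [hDuniv] at hBD
    linarith
  have hcount := count_paths G B c (by linarith) hBdeg
  set S := (((B ×ˢ B) ×ˢ (B ×ˢ B)).filter fun q =>
        G.Adj q.1.1 q.1.2 ∧ G.Adj q.1.1 q.2.1 ∧ q.2.1 ≠ q.1.2 ∧
        G.Adj q.1.2 q.2.2 ∧ q.2.2 ≠ q.1.1 ∧ q.2.2 ≠ q.2.1) with hS
  set PF : Finset (Fin 4 → V) := Finset.univ.filter (fun p => Function.Injective p ∧
      G.Adj (p 0) (p 1) ∧ G.Adj (p 1) (p 2) ∧ G.Adj (p 2) (p 3)) with hPF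
  have hncard : Set.ncard {p : Fin 4 → V | Function.Injective p ∧
      G.Adj (p 0) (p 1) ∧ G.Adj (p 1) (p 2) ∧ G.Adj (p 2) (p 3)} = PF.card := by
    rw [Set.ncard_eq_toFinset_card', Set.toFinset_setOf]
  have hinjS : S.card ≤ PF.card := by
    apply Finset.card_le_card_of_injOn (fun q => ![q.2.1, q.1.1, q.1.2, q.2.2])
    · intro q hq
      simp only [hS, Finset.mem_coe, Finset.mem_filter, Finset.mem_product] at hq
      obtain ⟨_, hxy, hxw, hwy, hyz, hzx, hzw⟩ := hq
      simp only [hPF, Finset.mem_coe, Finset.mem_filter, Finset.mem_univ, true_and]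
      refine ⟨inj4 hxw.ne' hwy (Ne.symm hzw) hxy.ne (Ne.symm hzx) hyz.ne, ?_, ?_, ?_⟩
      · simpa using hxw.symm
      · simpa using hxy
      · simpa using hyz
    · intro a _ b _ hab
      have h0 := congrFun hab 0
      have h1 := congrFun hab 1
      have h2 := congrFun hab 2
      have h3 := congrFun hab 3
      simp only [Matrix.cons_val_zero, Matrix.cons_val_one, Matrix.head_cons,
        Matrix.cons_val_two, Matrix.cons_val_three, Matrix.tail_cons] at h0 h1 h2 h3
      exact Prod.ext (Prod.ext h1 h2) (Prod.ext h0 h3)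
  have he0 : (0 : ℝ) ≤ (e' : ℝ) := Nat.cast_nonneg _
  have hcc : (0 : ℝ) ≤ (c - 1) * (c - 2) := by nlinarith
  have key : (e' : ℝ) ^ 3 / (10 * (n' : ℝ) ^ 2) ≤ (e' : ℝ) * ((c - 1) * (c - 2)) := by
    have h04 : (0.4 : ℝ) * c ^ 2 ≤ (c - 1) * (c - 2) := by nlinarith
    have heq : (e' : ℝ) ^ 3 / (10 * (n' : ℝ) ^ 2) = (e' : ℝ) * ((0.4 : ℝ) * c ^ 2) := by
      have he2 : (e' : ℝ) = 2 * c * n' := h2cn.symm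
      rw [he2]
      field_simp
      ring
    rw [heq]
    exact mul_le_mul_of_nonneg_left h04 he0
  have hmid : (e' : ℝ) * ((c - 1) * (c - 2)) ≤ (Dd G B : ℝ) * ((c - 1) * (c - 2)) :=
    mul_le_mul_of_nonneg_right hDB hcc
  have hSP : (S.card : ℝ) ≤ (PF.card : ℝ) := by exact_mod_cast hinjS
  rw [hncard]
  calc ((PF.card : ℕ) : ℝ) ≥ (S.card : ℝ) := hSP
    _ ≥ (Dd G B : ℝ) * ((c - 1) * (c - 2)) := hcount
    _ ≥ (e' : ℝ) * ((c - 1) * (c - 2)) := hmid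
    _ ≥ (e' : ℝ) ^ 3 / (10 * (n' : ℝ) ^ 2) := key
end

section
/- Let H be a linear triple system on n vertices with m edges and average degree d = 3m/n. For each vertex v, let G_v be the graph on V(H)∖{v} with yz an edge iff there exist vertices w, x with uwx, xyz ∈ E(H) (for u = v). Then Σ_{v ∈ V(H)} e(G_v) = 4·Σ_{x ∈ V(H)} C(d(x), 2) ≥ 4n·C(d, 2), where d(x) is the degree of x in H and e(G_v) the number of edges of G_v. -/
open Finset

lemma two_mul_choose_two (k : ℕ) : 2 * k.choose 2 = k * (k - 1) := by
  have hev : Even (k * (k - 1)) := by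
    cases k with
    | zero => simp
    | succ k => simpa [Nat.mul_comm] using Nat.even_mul_succ_self k
  rw [Nat.choose_two_right]
  exact Nat.mul_div_cancel' hev.two_dvd

theorem stmt_13 {V : Type*} [Fintype V] [DecidableEq V]
    (H : Finset (Finset V)) (n m : ℕ) (hn : Fintype.card V = n) (hm : H.card = m)
    (hn0 : 0 < n)
    (h3 : ∀ e ∈ H, e.card = 3)
    (hlin : ∀ e ∈ H, ∀ f ∈ H, e ≠ f → (e ∩ f).card ≤ 1) :
    ((∑ v : V, Set.ncard {p : Finset V | p.card = 2 ∧
        ∃ e ∈ H, ∃ f ∈ H, e ≠ f ∧ (e ∩ f).card = 1 ∧ p ⊆ f \ e ∧ v ∈ e \ f} : ℕ) : ℝ)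
      = 4 * ∑ x : V, (((H.filter (fun e => x ∈ e)).card.choose 2 : ℕ) : ℝ)
    ∧ (4 * ∑ x : V, (((H.filter (fun e => x ∈ e)).card.choose 2 : ℕ) : ℝ))
        ≥ 4 * (n : ℝ) * ((3 * (m : ℝ) / (n : ℝ)) * ((3 * (m : ℝ) / (n : ℝ)) - 1) / 2) := by
  classical
  set D : Finset (Finset V × Finset V) := (H ×ˢ H).filter (fun q => q.1 ≠ q.2) with hD
  set P : Finset (Finset V × Finset V) := D.filter (fun q => (q.1 ∩ q.2).card = 1) with hP
  have hsd : ∀ e ∈ H, ∀ f : Finset V, (e ∩ f).card = 1 → (e \ f).card = 2 := by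
    intro e he f h1
    have := Finset.card_sdiff_add_card_inter e f
    rw [h1, h3 e he] at this
    omega
  constructor
  · -- equality part
    have key : ∀ v : V, Set.ncard {p : Finset V | p.card = 2 ∧
        ∃ e ∈ H, ∃ f ∈ H, e ≠ f ∧ (e ∩ f).card = 1 ∧ p ⊆ f \ e ∧ v ∈ e \ f}
        = ((P.filter (fun q => v ∈ q.1 \ q.2)).image (fun q => q.2 \ q.1)).card := by
      intro v
      rw [← Set.ncard_coe_finset]
      congr 1
      ext p
      constructor
      · intro h
        obtain ⟨hp2, e, he, f, hf, hef, h1, hsub, hv⟩ := h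
        rw [Finset.mem_coe, Finset.mem_image]
        refine ⟨(e, f), ?_, ?_⟩
        · rw [Finset.mem_filter, hP, Finset.mem_filter, hD, Finset.mem_filter,
            Finset.mem_product]
          exact ⟨⟨⟨⟨he, hf⟩, hef⟩, h1⟩, hv⟩
        · have hfe : (f \ e).card = 2 := hsd f hf e (by rwa [Finset.inter_comm])
          exact (Finset.eq_of_subset_of_card_le hsub (by omega)).symm
      · intro h
        rw [Finset.mem_coe, Finset.mem_image] at h
        obtain ⟨⟨e, f⟩, hq, rfl⟩ := h
        rw [Finset.mem_filter, hP, Finset.mem_filter, hD, Finset.mem_filter,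
          Finset.mem_product] at hq
        obtain ⟨⟨⟨⟨he, hf⟩, hef⟩, h1⟩, hv⟩ := hq
        exact ⟨hsd f hf e (by rwa [Finset.inter_comm] at h1), e, he, f, hf, hef, h1,
          Finset.Subset.refl _, hv⟩
    have inj : ∀ v : V, ((P.filter (fun q => v ∈ q.1 \ q.2)).image (fun q => q.2 \ q.1)).card
        = (P.filter (fun q => v ∈ q.1 \ q.2)).card := by
      intro v
      apply Finset.card_image_of_injOn
      rintro ⟨e, f⟩ hq ⟨e', f'⟩ hq' heq
      rw [Finset.mem_coe, Finset.mem_filter, hP, Finset.mem_filter, hD, Finset.mem_filter,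
        Finset.mem_product] at hq hq'
      obtain ⟨⟨⟨⟨he, hf⟩, hef⟩, h1⟩, hv⟩ := hq
      obtain ⟨⟨⟨⟨he', hf'⟩, hef'⟩, h1'⟩, hv'⟩ := hq'
      simp only at heq hv hv' h1 h1'
      have hfe : (f \ e).card = 2 := hsd f hf e (by rwa [Finset.inter_comm])
      have hff' : f = f' := by
        by_contra hne
        have hle := hlin f hf f' hf' hne
        have hsub : f \ e ⊆ f ∩ f' := by
          intro x hx
          refine Finset.mem_inter.2 ⟨Finset.sdiff_subset hx, ?_⟩
          exact Finset.sdiff_subset (heq ▸ hx)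
        have := Finset.card_le_card hsub
        omega
      subst hff'
      have hie : f ∩ e = f ∩ e' := by
        have h2 := congrArg (fun s => f \ s) heq
        simpa [Finset.sdiff_sdiff_self_left] using h2
      obtain ⟨x, hx⟩ := Finset.card_eq_one.1 h1
      have hxef : x ∈ e ∩ f := hx ▸ Finset.mem_singleton_self x
      have hxe : x ∈ e := (Finset.mem_inter.1 hxef).1
      have hxf : x ∈ f := (Finset.mem_inter.1 hxef).2
      have hxe' : x ∈ e' := by
        have : x ∈ f ∩ e' := hie ▸ (Finset.mem_inter.2 ⟨hxf, hxe⟩)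
        exact (Finset.mem_inter.1 this).2
      have hve : v ∈ e := (Finset.mem_sdiff.1 hv).1
      have hve' : v ∈ e' := (Finset.mem_sdiff.1 hv').1
      have hvf : v ∉ f := (Finset.mem_sdiff.1 hv).2
      have hvx : v ≠ x := fun h => hvf (h ▸ hxf)
      have hee' : e = e' := by
        by_contra hne
        have hle := hlin e he e' he' hne
        have hsub : ({v, x} : Finset V) ⊆ e ∩ e' := by
          intro y hy
          rcases Finset.mem_insert.1 hy with rfl | hy
          · exact Finset.mem_inter.2 ⟨hve, hve'⟩
          · rw [Finset.mem_singleton] at hy; subst hy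
            exact Finset.mem_inter.2 ⟨hxe, hxe'⟩
        have h2 : ({v, x} : Finset V).card = 2 := by
          rw [Finset.card_insert_of_notMem (by simpa using hvx), Finset.card_singleton]
        have := Finset.card_le_card hsub
        omega
      subst hee'
      rfl
    have swap1 : ∑ v : V, (P.filter (fun q => v ∈ q.1 \ q.2)).card
        = ∑ q ∈ P, (q.1 \ q.2).card := by
      simp only [Finset.card_filter]
      rw [Finset.sum_comm]
      refine Finset.sum_congr rfl (fun q _ => ?_)
      rw [← Finset.card_filter]
      congr 1
      ext y
      simp [Finset.mem_sdiff]
    have hPsum : ∑ q ∈ P, (q.1 \ q.2).card = 2 * P.card := by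
      rw [Finset.sum_congr rfl (fun q hq => ?_), Finset.sum_const, smul_eq_mul, mul_comm]
      rw [hP, Finset.mem_filter, hD, Finset.mem_filter, Finset.mem_product] at hq
      exact hsd q.1 hq.1.1.1 q.2 hq.2
    have hPcard : P.card = ∑ x : V, 2 * ((H.filter (fun e => x ∈ e)).card.choose 2) := by
      have step : ∀ x : V, 2 * ((H.filter (fun e => x ∈ e)).card.choose 2)
          = (D.filter (fun q => x ∈ q.1 ∩ q.2)).card := by
        intro x
        rw [two_mul_choose_two]
        have : (H.filter (fun e => x ∈ e)).card * ((H.filter (fun e => x ∈ e)).card - 1)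
            = (H.filter (fun e => x ∈ e)).offDiag.card := by
          rw [Finset.offDiag_card]
          generalize (H.filter (fun e => x ∈ e)).card = k
          cases k with
          | zero => simp
          | succ k => simp [Nat.succ_sub_one, Nat.succ_mul, Nat.mul_succ]
        rw [this]
        congr 1
        ext ⟨e, f⟩
        simp only [Finset.mem_offDiag, Finset.mem_filter, hD, Finset.mem_product,
          Finset.mem_inter]
        tauto
      have swap2 : ∑ x : V, (D.filter (fun q => x ∈ q.1 ∩ q.2)).card
          = ∑ q ∈ D, (q.1 ∩ q.2).card := by
        simp only [Finset.card_filter]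
        rw [Finset.sum_comm]
        refine Finset.sum_congr rfl (fun q _ => ?_)
        rw [← Finset.card_filter]
        congr 1
        ext y
        simp [Finset.mem_inter]
      calc P.card = ∑ q ∈ D, (q.1 ∩ q.2).card := by
              rw [hP, Finset.card_filter]
              refine Finset.sum_congr rfl (fun q hq => ?_)
              rw [hD, Finset.mem_filter, Finset.mem_product] at hq
              have := hlin q.1 hq.1.1 q.2 hq.1.2 hq.2
              interval_cases h : (q.1 ∩ q.2).card <;> simp
        _ = ∑ x : V, (D.filter (fun q => x ∈ q.1 ∩ q.2)).card := swap2.symm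
        _ = ∑ x : V, 2 * ((H.filter (fun e => x ∈ e)).card.choose 2) :=
              Finset.sum_congr rfl (fun x _ => (step x).symm)
    have total : (∑ v : V, Set.ncard {p : Finset V | p.card = 2 ∧
        ∃ e ∈ H, ∃ f ∈ H, e ≠ f ∧ (e ∩ f).card = 1 ∧ p ⊆ f \ e ∧ v ∈ e \ f} : ℕ)
        = ∑ x : V, 4 * ((H.filter (fun e => x ∈ e)).card.choose 2) := by
      calc _ = ∑ v : V, (P.filter (fun q => v ∈ q.1 \ q.2)).card :=
              Finset.sum_congr rfl (fun v _ => (key v).trans (inj v))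
        _ = 2 * P.card := by rw [swap1, hPsum]
        _ = ∑ x : V, 4 * ((H.filter (fun e => x ∈ e)).card.choose 2) := by
              rw [hPcard, Finset.mul_sum]
              exact Finset.sum_congr rfl (fun x _ => by ring)
    rw [total]
    push_cast
    rw [Finset.mul_sum]
  · -- inequality part
    have hnat : ∑ x : V, (H.filter (fun e => x ∈ e)).card = 3 * m := by
      have hsw : ∑ x : V, (H.filter (fun e => x ∈ e)).card = ∑ e ∈ H, e.card := by
        simp only [Finset.card_filter]
        rw [Finset.sum_comm]
        refine Finset.sum_congr rfl (fun e _ => ?_)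
        rw [← Finset.card_filter]
        congr 1
        ext y
        simp
      rw [hsw, Finset.sum_congr rfl h3, Finset.sum_const, smul_eq_mul, hm, Nat.mul_comm]
    have hdeg : ∑ x : V, ((H.filter (fun e => x ∈ e)).card : ℝ) = 3 * m := by
      rw [← Nat.cast_sum, hnat]; push_cast; ring
    have hn' : (0 : ℝ) < n := by exact_mod_cast hn0
    set t : ℝ := 3 * (m : ℝ) / (n : ℝ) with ht
    have htn : t * n = 3 * m := div_mul_cancel₀ _ (ne_of_gt hn')
    have hCS : (∑ x : V, ((H.filter (fun e => x ∈ e)).card : ℝ))^2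
        ≤ n * ∑ x : V, ((H.filter (fun e => x ∈ e)).card : ℝ)^2 := by
      have := sq_sum_le_card_mul_sum_sq (s := (Finset.univ : Finset V))
        (f := fun x => ((H.filter (fun e => x ∈ e)).card : ℝ))
      simpa [hn] using this
    rw [hdeg] at hCS
    have hch : ∀ x : V, (((H.filter (fun e => x ∈ e)).card.choose 2 : ℕ) : ℝ)
        = ((H.filter (fun e => x ∈ e)).card : ℝ) *
          (((H.filter (fun e => x ∈ e)).card : ℝ) - 1) / 2 := fun x => Nat.cast_choose_two ℝ _
    rw [Finset.sum_congr rfl (fun x _ => hch x)]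
    have hsum2 : ∑ x : V, ((H.filter (fun e => x ∈ e)).card : ℝ) *
        (((H.filter (fun e => x ∈ e)).card : ℝ) - 1) / 2
        = ((∑ x : V, ((H.filter (fun e => x ∈ e)).card : ℝ)^2)
          - (3 * m : ℝ)) / 2 := by
      rw [← hdeg, ← Finset.sum_sub_distrib, ← Finset.sum_div]
      congr 1
      exact Finset.sum_congr rfl (fun x _ => by ring)
    rw [hsum2, ge_iff_le]
    have hQ : t * (3 * m) ≤ ∑ x : V, ((H.filter (fun e => x ∈ e)).card : ℝ)^2 := by
      rw [← htn] at hCS ⊢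
      nlinarith [hCS, hn']
    nlinarith [hQ, htn]
end

section
/- For α, β ∈ ℂ written as α = Σ_{k=1}^{3m} a_k·13^k with a_k ∈ {1,2} and β = Σ_{k=1}^{3m} b_k·13^k with b_k ∈ {i, 2i}, suppose for every k, (a_k, b_k) ≠ (2, i). Define δ = Σ_{k=1}^{3m} d_k·13^k with d_k = (a_k(1+i) + b_k(1−i))/2. Then each digit d_k lies in {1+i, 3(1+i)/2, 2+2i}, and the map (α, β) ↦ δ is injective on the set of such admissible pairs. -/
lemma digitsUnique13 : ∀ (n : ℕ) (e e' : Fin n → ℕ), (∀ k, e k < 13) → (∀ k, e' k < 13) →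
    (∑ k, e k * 13 ^ (k : ℕ)) = (∑ k, e' k * 13 ^ (k : ℕ)) → e = e' := by
  intro n
  induction n with
  | zero => intro e e' _ _ _; funext k; exact k.elim0
  | succ n ih =>
    intro e e' he he' hsum
    have hsplit : ∀ (f : Fin (n + 1) → ℕ),
        ∑ k : Fin (n + 1), f k * 13 ^ (k : ℕ)
          = f 0 + (∑ k : Fin n, f k.succ * 13 ^ (k : ℕ)) * 13 := by
      intro f
      rw [Fin.sum_univ_succ, Finset.sum_mul]
      simp [Fin.val_succ, pow_succ, mul_assoc]
    rw [hsplit e, hsplit e'] at hsum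
    have h0 : e 0 = e' 0 ∧
        (∑ k : Fin n, e k.succ * 13 ^ (k : ℕ)) = ∑ k : Fin n, e' k.succ * 13 ^ (k : ℕ) := by
      have := he 0; have := he' 0; omega
    have htail : (fun k : Fin n => e k.succ) = fun k => e' k.succ :=
      ih _ _ (fun k => he k.succ) (fun k => he' k.succ) h0.2
    funext k
    induction k using Fin.cases with
    | zero => exact h0.1
    | succ i => exact congrFun htail i

open Complex in
theorem stmt_17 (m : ℕ) (a a' b b' : Fin (3 * m) → ℂ)
    (ha : ∀ k, a k = 1 ∨ a k = 2) (hb : ∀ k, b k = I ∨ b k = 2 * I)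
    (hab : ∀ k, ¬(a k = 2 ∧ b k = I))
    (ha' : ∀ k, a' k = 1 ∨ a' k = 2) (hb' : ∀ k, b' k = I ∨ b' k = 2 * I)
    (hab' : ∀ k, ¬(a' k = 2 ∧ b' k = I)) :
    (∀ k, (a k * (1 + I) + b k * (1 - I)) / 2
        ∈ ({1 + I, 3 * (1 + I) / 2, 2 + 2 * I} : Set ℂ))
    ∧ (∑ k, ((a k * (1 + I) + b k * (1 - I)) / 2) * 13 ^ ((k : ℕ) + 1)
        = ∑ k, ((a' k * (1 + I) + b' k * (1 - I)) / 2) * 13 ^ ((k : ℕ) + 1)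
        → a = a' ∧ b = b') := by
  have key : ∀ (u v : Fin (3 * m) → ℂ), (∀ k, u k = 1 ∨ u k = 2) →
      (∀ k, v k = I ∨ v k = 2 * I) → (∀ k, ¬(u k = 2 ∧ v k = I)) →
      ∀ k, ∃ n : ℕ, u k * (1 + I) + v k * (1 - I) = (n : ℂ) * (1 + I) ∧
        ((n = 2 ∧ u k = 1 ∧ v k = I) ∨ (n = 3 ∧ u k = 1 ∧ v k = 2 * I) ∨
         (n = 4 ∧ u k = 2 ∧ v k = 2 * I)) := by
    intro u v hu hv huv k
    rcases hu k with h1 | h1 <;> rcases hv k with h2 | h2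
    · exact ⟨2, by rw [h1, h2]; push_cast; ring_nf; rw [I_sq]; ring, Or.inl ⟨rfl, h1, h2⟩⟩
    · exact ⟨3, by rw [h1, h2]; push_cast; ring_nf; rw [I_sq]; ring, Or.inr (Or.inl ⟨rfl, h1, h2⟩)⟩
    · exact absurd ⟨h1, h2⟩ (huv k)
    · exact ⟨4, by rw [h1, h2]; push_cast; ring_nf; rw [I_sq]; ring, Or.inr (Or.inr ⟨rfl, h1, h2⟩)⟩
  obtain ⟨e, he⟩ := Classical.axiomOfChoice (key a b ha hb hab)
  obtain ⟨e', he'⟩ := Classical.axiomOfChoice (key a' b' ha' hb' hab')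
  constructor
  · intro k
    obtain ⟨heq, hcase⟩ := he k
    simp only [Set.mem_insert_iff, Set.mem_singleton_iff]
    rcases hcase with ⟨hn, _, _⟩ | ⟨hn, _, _⟩ | ⟨hn, _, _⟩ <;> rw [heq, hn]
    · left; push_cast; ring
    · right; left; push_cast; ring
    · right; right; push_cast; ring
  · intro hsum
    have hrw : ∀ (u v : Fin (3 * m) → ℂ) (f : Fin (3 * m) → ℕ),
        (∀ k, u k * (1 + I) + v k * (1 - I) = (f k : ℂ) * (1 + I)) →
        ∑ k, ((u k * (1 + I) + v k * (1 - I)) / 2) * 13 ^ ((k : ℕ) + 1)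
          = ((1 + I) / 2) * ((∑ k, f k * 13 ^ ((k : ℕ) + 1) : ℕ) : ℂ) := by
      intro u v f hf
      push_cast
      rw [Finset.mul_sum]
      refine Finset.sum_congr rfl fun k _ => ?_
      rw [hf k]; ring
    rw [hrw a b e (fun k => (he k).1), hrw a' b' e' (fun k => (he' k).1)] at hsum
    have hne : ((1 + I) / 2 : ℂ) ≠ 0 := by
      simp [div_ne_zero_iff, Complex.ext_iff]
    have hnat : (∑ k, e k * 13 ^ ((k : ℕ) + 1)) = ∑ k, e' k * 13 ^ ((k : ℕ) + 1) := by
      exact_mod_cast mul_left_cancel₀ hne hsum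
    have hpow : ∀ (f : Fin (3 * m) → ℕ),
        (∑ k, f k * 13 ^ ((k : ℕ) + 1)) = (∑ k, f k * 13 ^ (k : ℕ)) * 13 := by
      intro f; rw [Finset.sum_mul]; simp [pow_succ, mul_assoc]
    rw [hpow e, hpow e'] at hnat
    have hbd : ∀ k, e k < 13 := by
      intro k; rcases (he k).2 with ⟨hn, _⟩ | ⟨hn, _⟩ | ⟨hn, _⟩ <;> omega
    have hbd' : ∀ k, e' k < 13 := by
      intro k; rcases (he' k).2 with ⟨hn, _⟩ | ⟨hn, _⟩ | ⟨hn, _⟩ <;> omega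
    have hee : e = e' := digitsUnique13 _ e e' hbd hbd' (by omega)
    constructor <;> funext k <;> have hk := congrFun hee k <;>
      rcases (he k).2 with ⟨hn, hu, hv⟩ | ⟨hn, hu, hv⟩ | ⟨hn, hu, hv⟩ <;>
      rcases (he' k).2 with ⟨hn', hu', hv'⟩ | ⟨hn', hu', hv'⟩ | ⟨hn', hu', hv'⟩ <;>
      rw [hn, hn'] at hk <;>
      first
        | omega
        | (rw [hu, hu'])
        | (rw [hv, hv'])
end
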